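/- Let w ∈ S_n, a = w(1), and b ∈ [n] with b ≠ a and a < b. Let p be an integer with 0 ≤ p < w⁻¹(b) - 1, and consider the sequence of transpositions Γ(1,p) = ((1,p+2),(1,p+3),…,(1,n)) acting on positions. Then the sum over all subsets T = {(1,k₁),…,(1,kₛ)} of Γ(1,p) (taken in order) such that the chain w < w(1,k₁) < w(1,k₁)(1,k₂) < … is increasing in Bruhat order and the final permutation wT satisfies wT(1) = b, of t^{N(w,T)}·(1-t)^{|T|}, equals t^{N_{a,b}(w[2,p+1])}·(1-t), where N_{a,b}(w[2,p+1]) is the number of indices 2 ≤ i ≤ p+1 with a < w(i) < b, and N(w,T) = Σᵢ N_{cᵢ,dᵢ}(wᵢ[aᵢ,bᵢ]) with wᵢ = w(a₁,b₁)⋯(aᵢ,bᵢ), cᵢ = min(wᵢ(aᵢ),wᵢ(bᵢ)), dᵢ = max(wᵢ(aᵢ),wᵢ(bᵢ)). -/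

import Mathlib

open Polynomial

/-- Coxeter length of `w` viewed as a permutation of `[n] = {1,…,n}`:
the number of inversions. -/
noncomputable def ell (n : ℕ) (w : Equiv.Perm ℕ) : ℕ :=
  Set.ncard {p : ℕ × ℕ | p.1 ∈ Finset.Icc 1 n ∧ p.2 ∈ Finset.Icc 1 n ∧
    p.1 < p.2 ∧ w p.2 < w p.1}

/-- Successively multiply `w` on the right by the transpositions in the list `T`. -/
def applyT (w : Equiv.Perm ℕ) : List (ℕ × ℕ) → Equiv.Perm ℕ
  | [] => w
  | t :: rest => applyT (w * Equiv.swap t.1 t.2) rest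

/-- Bruhat-increasing chain condition: consecutive elements differ by a
reflection, so Bruhat increase is equivalent to length increase at each step. -/
def BruhatInc (n : ℕ) (w : Equiv.Perm ℕ) : List (ℕ × ℕ) → Prop
  | [] => True
  | t :: rest => ell n w < ell n (w * Equiv.swap t.1 t.2) ∧
      BruhatInc n (w * Equiv.swap t.1 t.2) rest

/-- `N_{a,b}(s)`: the number of entries of the sequence `s` strictly between `a` and `b`. -/
def Nab (a b : ℕ) (s : List ℕ) : ℕ := s.countP (fun x => decide (a < x ∧ x < b))

/-- The statistic `N(w,T) = Σᵢ N_{cᵢ,dᵢ}(wᵢ[aᵢ,bᵢ])`, where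
`wᵢ = w(a₁,b₁)⋯(aᵢ,bᵢ)`, `cᵢ = min(wᵢ(aᵢ),wᵢ(bᵢ))`, `dᵢ = max(wᵢ(aᵢ),wᵢ(bᵢ))`,
and `wᵢ[aᵢ,bᵢ]` is the window of values of `wᵢ` at positions `aᵢ,…,bᵢ`. -/
def Nstat : Equiv.Perm ℕ → List (ℕ × ℕ) → ℕ
  | _, [] => 0
  | w, t :: rest =>
    let w' := w * Equiv.swap t.1 t.2
    Nab (min (w' t.1) (w' t.2)) (max (w' t.1) (w' t.2))
        ((List.range' t.1 (t.2 + 1 - t.1)).map w') + Nstat w' rest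

/-- The list of transpositions `(1,k₁),(1,k₂),…` for `K = {k₁ < k₂ < …}`,
taken in increasing order. -/
def TL (K : Finset ℕ) : List (ℕ × ℕ) :=
  (K.sort (· ≤ ·)).map (fun k => ((1 : ℕ), k))

lemma inv_finite (n : ℕ) (w : Equiv.Perm ℕ) :
    {p : ℕ × ℕ | p.1 ∈ Finset.Icc 1 n ∧ p.2 ∈ Finset.Icc 1 n ∧
      p.1 < p.2 ∧ w p.2 < w p.1}.Finite := by
  apply Set.Finite.subset (Finset.Icc 1 n ×ˢ Finset.Icc 1 n).finite_toSet
  rintro ⟨x, y⟩ ⟨hx, hy, -, -⟩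
  simp only [Finset.coe_product, Set.mem_prod, Finset.mem_coe]
  exact ⟨hx, hy⟩

lemma ell_lt (n : ℕ) (w : Equiv.Perm ℕ) {i j : ℕ}
    (hi : i ∈ Finset.Icc 1 n) (hj : j ∈ Finset.Icc 1 n) (hij : i < j)
    (h : w i < w j) : ell n w < ell n (w * Equiv.swap i j) := by
  classical
  obtain ⟨hi1, hin⟩ := Finset.mem_Icc.mp hi
  obtain ⟨hj1, hjn⟩ := Finset.mem_Icc.mp hj
  set w' := w * Equiv.swap i j with hw'
  have hw'i : w' i = w j := by simp [hw', Equiv.Perm.mul_apply]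
  have hw'j : w' j = w i := by simp [hw', Equiv.Perm.mul_apply]
  have hw'o : ∀ x, x ≠ i → x ≠ j → w' x = w x := by
    intro x h1 h2
    simp [hw', Equiv.Perm.mul_apply, Equiv.swap_apply_of_ne_of_ne h1 h2]
  set S : Set (ℕ × ℕ) := {p : ℕ × ℕ | p.1 ∈ Finset.Icc 1 n ∧ p.2 ∈ Finset.Icc 1 n ∧
    p.1 < p.2 ∧ w p.2 < w p.1} with hS
  set S' : Set (ℕ × ℕ) := {p : ℕ × ℕ | p.1 ∈ Finset.Icc 1 n ∧ p.2 ∈ Finset.Icc 1 n ∧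
    p.1 < p.2 ∧ w' p.2 < w' p.1} with hS'
  have hfin : S.Finite := inv_finite n w
  have hfin' : S'.Finite := inv_finite n w'
  set f : ℕ × ℕ → ℕ × ℕ := fun q =>
    if q.2 = i then (q.1, j)
    else if q.2 = j ∧ q.1 < i then (q.1, i)
    else if q.1 = j then (i, q.2)
    else if q.1 = i ∧ j < q.2 then (j, q.2)
    else q with hf
  have hfeval : ∀ x y : ℕ, f (x, y) =
      (if y = i then (x, j)
      else if y = j ∧ x < i then (x, i)
      else if x = j then (i, y)
      else if x = i ∧ j < y then (j, y)
      else (x, y)) := fun x y => rfl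
  have hmaps : ∀ q ∈ S, f q ∈ S' \ {(i, j)} := by
    rintro ⟨x, y⟩ ⟨hx, hy, hxy, hval⟩
    obtain ⟨hx1, hxn⟩ := Finset.mem_Icc.mp hx
    obtain ⟨hy1, hyn⟩ := Finset.mem_Icc.mp hy
    simp only at hxy hval
    rw [hfeval]
    split_ifs with h1 h2 h3 h4
    · -- y = i, image (x, j)
      rw [h1] at hval
      have hvx : w' x = w x := hw'o x (by omega) (by omega)
      refine ⟨⟨Finset.mem_Icc.mpr ⟨hx1, hxn⟩, Finset.mem_Icc.mpr ⟨hj1, hjn⟩, by omega, ?_⟩, ?_⟩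
      · show w' j < w' x
        rw [hvx, hw'j]; omega
      · simp only [Set.mem_singleton_iff, Prod.mk.injEq]; omega
    · -- y = j, x < i, image (x, i)
      obtain ⟨h2a, h2b⟩ := h2
      rw [h2a] at hval
      have hvx : w' x = w x := hw'o x (by omega) (by omega)
      refine ⟨⟨Finset.mem_Icc.mpr ⟨hx1, hxn⟩, Finset.mem_Icc.mpr ⟨hi1, hin⟩, by omega, ?_⟩, ?_⟩
      · show w' i < w' x
        rw [hvx, hw'i]; omega
      · simp only [Set.mem_singleton_iff, Prod.mk.injEq]; omega
    · -- x = j, image (i, y)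
      rw [h3] at hval
      have hvy : w' y = w y := hw'o y (by omega) (by omega)
      refine ⟨⟨Finset.mem_Icc.mpr ⟨hi1, hin⟩, Finset.mem_Icc.mpr ⟨hy1, hyn⟩, by omega, ?_⟩, ?_⟩
      · show w' y < w' i
        rw [hvy, hw'i]; omega
      · simp only [Set.mem_singleton_iff, Prod.mk.injEq]; omega
    · -- x = i, j < y, image (j, y)
      obtain ⟨h4a, h4b⟩ := h4
      rw [h4a] at hval
      have hvy : w' y = w y := hw'o y (by omega) (by omega)
      refine ⟨⟨Finset.mem_Icc.mpr ⟨hj1, hjn⟩, Finset.mem_Icc.mpr ⟨hy1, hyn⟩, by omega, ?_⟩, ?_⟩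
      · show w' y < w' j
        rw [hvy, hw'j]; omega
      · simp only [Set.mem_singleton_iff, Prod.mk.injEq]; omega
    · -- identity
      have hne : ¬(x = i ∧ y = j) := by
        rintro ⟨hxi, hyj⟩
        rw [hxi, hyj] at hval; omega
      refine ⟨⟨Finset.mem_Icc.mpr ⟨hx1, hxn⟩, Finset.mem_Icc.mpr ⟨hy1, hyn⟩, hxy, ?_⟩, ?_⟩
      · show w' y < w' x
        by_cases hxi : x = i
        · have hyj : y ≠ j := fun hyj => hne ⟨hxi, hyj⟩
          have hvy : w' y = w y := hw'o y (by omega) hyj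
          rw [hxi] at hval ⊢
          rw [hvy, hw'i]
          omega
        · by_cases hyj : y = j
          · have hvx : w' x = w x := hw'o x hxi (by omega)
            rw [hyj] at hval ⊢
            rw [hvx, hw'j]
            omega
          · rw [hw'o x hxi (by omega), hw'o y (by omega) hyj]
            exact hval
      · simp only [Set.mem_singleton_iff, Prod.mk.injEq]
        exact hne
  -- f is an involution
  have hff : ∀ x y : ℕ, x < y → ¬(x = i ∧ y = j) → f (f (x, y)) = (x, y) := by
    intro x y hxy hne
    by_cases h1 : y = i
    · have e1 : f (x, y) = (x, j) := by rw [hfeval, if_pos h1]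
      have e2 : f (x, j) = (x, i) := by
        rw [hfeval, if_neg (by omega), if_pos ⟨rfl, by omega⟩]
      rw [e1, e2, h1]
    · by_cases h2 : y = j ∧ x < i
      · have e1 : f (x, y) = (x, i) := by rw [hfeval, if_neg h1, if_pos h2]
        have e2 : f (x, i) = (x, j) := by rw [hfeval, if_pos rfl]
        rw [e1, e2, h2.1]
      · by_cases h3 : x = j
        · have e1 : f (x, y) = (i, y) := by rw [hfeval, if_neg h1, if_neg h2, if_pos h3]
          have e2 : f (i, y) = (j, y) := by
            rw [hfeval, if_neg (by omega), if_neg (by omega), if_neg (by omega),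
              if_pos ⟨rfl, by omega⟩]
          rw [e1, e2, h3]
        · by_cases h4 : x = i ∧ j < y
          · have e1 : f (x, y) = (j, y) := by
              rw [hfeval, if_neg h1, if_neg h2, if_neg h3, if_pos h4]
            have e2 : f (j, y) = (i, y) := by
              rw [hfeval, if_neg (by omega), if_neg (by omega), if_pos rfl]
            rw [e1, e2, h4.1]
          · have e1 : f (x, y) = (x, y) := by
              rw [hfeval, if_neg h1, if_neg h2, if_neg h3, if_neg h4]
            rw [e1, e1]
  have hinjOn : Set.InjOn f S := by
    rintro ⟨x1, y1⟩ hq1 ⟨x2, y2⟩ hq2 heq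
    obtain ⟨-, -, hxy1, hv1⟩ := hq1
    obtain ⟨-, -, hxy2, hv2⟩ := hq2
    simp only at hxy1 hv1 hxy2 hv2
    have hne1 : ¬(x1 = i ∧ y1 = j) := by
      rintro ⟨e1, e2⟩; rw [e1, e2] at hv1; omega
    have hne2 : ¬(x2 = i ∧ y2 = j) := by
      rintro ⟨e1, e2⟩; rw [e1, e2] at hv2; omega
    rw [← hff x1 y1 hxy1 hne1, ← hff x2 y2 hxy2 hne2, heq]
  have hle : S.ncard ≤ (S' \ {(i, j)}).ncard :=
    Set.ncard_le_ncard_of_injOn f hmaps hinjOn (hfin'.diff)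
  have hmem : ((i : ℕ), j) ∈ S' := by
    refine ⟨hi, hj, hij, ?_⟩
    show w' j < w' i
    rw [hw'i, hw'j]; exact h
  have hlt : (S' \ {(i, j)}).ncard < S'.ncard :=
    Set.ncard_diff_singleton_lt_of_mem hmem hfin'
  exact lt_of_le_of_lt hle hlt

lemma ell_lt_iff (n : ℕ) (w : Equiv.Perm ℕ) {i j : ℕ}
    (hi : i ∈ Finset.Icc 1 n) (hj : j ∈ Finset.Icc 1 n) (hij : i < j) :
    ell n w < ell n (w * Equiv.swap i j) ↔ w i < w j := by
  constructor
  · intro hlt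
    by_contra hle
    push_neg at hle
    have hne : w j ≠ w i := fun e => absurd (w.injective e) (by omega)
    have h2 : (w * Equiv.swap i j) i < (w * Equiv.swap i j) j := by
      simp only [Equiv.Perm.mul_apply, Equiv.swap_apply_left, Equiv.swap_apply_right]
      omega
    have h3 := ell_lt n (w * Equiv.swap i j) hi hj hij h2
    rw [mul_assoc, Equiv.swap_mul_self, mul_one] at h3
    omega
  · exact ell_lt n w hi hj hij

/-- value at position 1 after applying an increasing sequence of `(1,k)` swaps:
it is the value of `u` at the largest `k`. -/
lemma applyT_final (l : List ℕ) (hl : l ≠ []) (hsort : l.Pairwise (· < ·))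
    (h2 : ∀ k ∈ l, 2 ≤ k) (u : Equiv.Perm ℕ) :
    ∃ g ∈ l, (∀ x ∈ l, x ≤ g) ∧ applyT u (l.map fun k => ((1 : ℕ), k)) 1 = u g := by
  induction l generalizing u with
  | nil => exact absurd rfl hl
  | cons k t ih =>
    rcases eq_or_ne t [] with rfl | ht
    · refine ⟨k, by simp, by simp, ?_⟩
      show applyT (u * Equiv.swap 1 k) [] 1 = u k
      simp [applyT, Equiv.Perm.mul_apply]
    · obtain ⟨g, hg, hbd, hval⟩ := ih ht hsort.of_cons (fun x hx => h2 x (by simp [hx]))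
        (u * Equiv.swap 1 k)
      have hkg : k < g := (List.pairwise_cons.mp hsort).1 g hg
      have hg2 : 2 ≤ k := h2 k (by simp)
      refine ⟨g, by simp [hg], ?_, ?_⟩
      · intro x hx
        rcases List.mem_cons.mp hx with rfl | hx
        · omega
        · exact hbd x hx
      · show applyT (u * Equiv.swap 1 k) (t.map fun k => ((1 : ℕ), k)) 1 = u g
        rw [hval]
        simp only [Equiv.Perm.mul_apply]
        rw [Equiv.swap_apply_of_ne_of_ne (by omega) (by omega)]

/-- the value at position 1 only increases along a Bruhat-increasing chain. -/
lemma applyT_mono (n : ℕ) (l : List ℕ) (hmem : ∀ k ∈ l, k ∈ Finset.Icc 2 n) :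
    ∀ u : Equiv.Perm ℕ, BruhatInc n u (l.map fun k => ((1 : ℕ), k)) →
      u 1 ≤ applyT u (l.map fun k => ((1 : ℕ), k)) 1 := by
  induction l with
  | nil => intro u _; exact le_refl _
  | cons k t ih =>
    intro u hB
    obtain ⟨h1, h2⟩ : (ell n u < ell n (u * Equiv.swap 1 k)) ∧
        BruhatInc n (u * Equiv.swap 1 k) (t.map fun k => ((1 : ℕ), k)) := hB
    have hk := Finset.mem_Icc.mp (hmem k (by simp))
    have hlt : u 1 < u k := (ell_lt_iff n u (Finset.mem_Icc.mpr (by omega))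
      (Finset.mem_Icc.mpr (by omega)) (by omega)).mp h1
    have := ih (fun x hx => hmem x (by simp [hx])) (u * Equiv.swap 1 k) h2
    have he : (u * Equiv.swap 1 k) 1 = u k := by simp [Equiv.Perm.mul_apply]
    rw [he] at this
    calc u 1 ≤ u k := le_of_lt hlt
    _ ≤ _ := this

lemma Nab_cons (a b x : ℕ) (l : List ℕ) :
    Nab a b (x :: l) = (if a < x ∧ x < b then 1 else 0) + Nab a b l := by
  simp only [Nab, List.countP_cons, decide_eq_true_eq]
  split_ifs <;> omega

lemma Nab_append (a b : ℕ) (l1 l2 : List ℕ) :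
    Nab a b (l1 ++ l2) = Nab a b l1 + Nab a b l2 := by
  simp [Nab, List.countP_append]

lemma Nab_split (a b c : ℕ) (hac : a < c) (hcb : c < b) (l : List ℕ) (hc : c ∉ l) :
    Nab a b l = Nab a c l + Nab c b l := by
  induction l with
  | nil => simp [Nab]
  | cons x t ih =>
    have hxc : x ≠ c := fun h => hc (h ▸ (List.mem_cons_self : x ∈ x :: t))
    have ht : c ∉ t := fun h => hc (List.mem_cons_of_mem x h)
    rw [Nab_cons, Nab_cons, Nab_cons, ih ht]
    split_ifs <;> omega

lemma range'_split (p : ℕ) : List.range' 1 (p + 2) = 1 :: (List.range' 2 p ++ [p + 2]) := by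
  rw [show p + 2 = (p + 1) + 1 from rfl, List.range'_succ]
  congr 1
  rw [List.range'_concat]
  norm_num
  omega

lemma range'_two_concat (p : ℕ) :
    List.range' 2 (p + 1) = List.range' 2 p ++ [p + 2] := by
  rw [List.range'_concat]
  norm_num
  omega

lemma map_congr_swap (v : Equiv.Perm ℕ) (i j p s : ℕ) (hi : ∀ x, s ≤ x → x < s + p → x ≠ i)
    (hj : ∀ x, s ≤ x → x < s + p → x ≠ j) :
    (List.range' s p).map (v * Equiv.swap i j) = (List.range' s p).map v := by
  apply List.map_congr_left
  intro x hx
  rw [List.mem_range'] at hx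
  obtain ⟨t, ht, rfl⟩ := hx
  simp only [Equiv.Perm.mul_apply]
  rw [Equiv.swap_apply_of_ne_of_ne (hi _ (by omega) (by omega)) (hj _ (by omega) (by omega))]

lemma Nab_single (a b x : ℕ) : Nab a b [x] = if a < x ∧ x < b then 1 else 0 := by
  rw [show ([x] : List ℕ) = x :: [] from rfl, Nab_cons]
  simp [Nab]

lemma bruhatInc_cons (n : ℕ) (w : Equiv.Perm ℕ) (t : ℕ × ℕ) (rest : List (ℕ × ℕ)) :
    BruhatInc n w (t :: rest) ↔ (ell n w < ell n (w * Equiv.swap t.1 t.2) ∧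
      BruhatInc n (w * Equiv.swap t.1 t.2) rest) := Iff.rfl

lemma applyT_cons (w : Equiv.Perm ℕ) (t : ℕ × ℕ) (rest : List (ℕ × ℕ)) :
    applyT w (t :: rest) = applyT (w * Equiv.swap t.1 t.2) rest := rfl

lemma Nstat_cons (w : Equiv.Perm ℕ) (t : ℕ × ℕ) (rest : List (ℕ × ℕ)) :
    Nstat w (t :: rest) =
      Nab (min ((w * Equiv.swap t.1 t.2) t.1) ((w * Equiv.swap t.1 t.2) t.2))
        (max ((w * Equiv.swap t.1 t.2) t.1) ((w * Equiv.swap t.1 t.2) t.2))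
        ((List.range' t.1 (t.2 + 1 - t.1)).map (w * Equiv.swap t.1 t.2))
      + Nstat (w * Equiv.swap t.1 t.2) rest := rfl

lemma TL_empty : TL ∅ = [] := by simp [TL]

lemma TL_singleton (k : ℕ) : TL {k} = [(1, k)] := by simp [TL]

lemma TL_eq (K : Finset ℕ) : TL K = (K.sort (· ≤ ·)).map (fun k => ((1 : ℕ), k)) := rfl

open scoped Classical in
lemma aux (n b : ℕ) (hb : b ∈ Finset.Icc 1 n) :
    ∀ (q : ℕ) (w : Equiv.Perm ℕ) (p : ℕ),
      (∀ x, x ∉ Finset.Icc 1 n → w x = x) → b ≠ w 1 → w 1 < b →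
      p + 1 < w.symm b → w.symm b - (p + 2) = q →
      ∑ K ∈ (Finset.Icc (p + 2) n).powerset.filter
          (fun K => BruhatInc n w (TL K) ∧ applyT w (TL K) 1 = b),
        (X : Polynomial ℤ) ^ Nstat w (TL K) * (1 - X) ^ K.card
      = X ^ Nab (w 1) b ((List.range' 2 p).map w) * (1 - X) := by
  intro q
  induction q with
  | zero =>
    intro w p hw hba hab hp hq
    obtain ⟨hb1, hbn⟩ := Finset.mem_Icc.mp hb
    have hm : w (w.symm b) = b := Equiv.apply_symm_apply w b
    have hmn : w.symm b ≤ n := by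
      by_contra hc
      push_neg at hc
      have h0 := hw (w.symm b) (by rw [Finset.mem_Icc]; omega)
      omega
    have hmp : w.symm b = p + 2 := by omega
    rw [hmp] at hm
    have hn2 : p + 2 ≤ n := by omega
    -- evaluate the singleton term
    have hTL : TL {p + 2} = [(1, p + 2)] := TL_singleton _
    have hsw1 : (w * Equiv.swap 1 (p + 2)) 1 = b := by
      simp [Equiv.Perm.mul_apply, hm]
    have hsw2 : (w * Equiv.swap 1 (p + 2)) (p + 2) = w 1 := by
      simp [Equiv.Perm.mul_apply]
    have hP : BruhatInc n w (TL {p + 2}) ∧ applyT w (TL {p + 2}) 1 = b := by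
      rw [hTL]
      refine ⟨(bruhatInc_cons n w (1, p + 2) []).mpr ⟨?_, trivial⟩, ?_⟩
      · exact ell_lt n w (Finset.mem_Icc.mpr (by omega)) (Finset.mem_Icc.mpr (by omega))
          (by omega) (by rw [hm]; exact hab)
      · rw [applyT_cons]
        exact hsw1
    rw [Finset.sum_filter]
    rw [Finset.sum_eq_single_of_mem ({p + 2} : Finset ℕ)
      (by rw [Finset.mem_powerset, Finset.singleton_subset_iff, Finset.mem_Icc]; omega)
      ?_]
    · rw [if_pos hP, hTL, Nstat_cons]
      have hwin : (List.range' 1 ((1, p+2).2 + 1 - (1, p+2).1)).map (w * Equiv.swap 1 (p+2))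
          = b :: (((List.range' 2 p).map w) ++ [w 1]) := by
        rw [show (1, p+2).2 + 1 - (1, p+2).1 = p + 2 from rfl, range'_split]
        rw [List.map_cons, List.map_append, List.map_singleton]
        rw [map_congr_swap w 1 (p+2) p 2 (fun x h1 h2 => by omega) (fun x h1 h2 => by omega)]
        rw [hsw1, hsw2]
      rw [hwin]
      rw [show ((1, p+2) : ℕ × ℕ).1 = 1 from rfl, show ((1, p+2) : ℕ × ℕ).2 = p + 2 from rfl,
        hsw1, hsw2]
      rw [min_eq_right (le_of_lt hab), max_eq_left (le_of_lt hab)]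
      rw [Nab_cons, Nab_append, Nab_single]
      rw [if_neg (by omega), if_neg (by omega)]
      show (X : Polynomial ℤ) ^ (0 + (Nab (w 1) b ((List.range' 2 p).map w) + 0) + Nstat _ [])
          * (1 - X) ^ (({p+2} : Finset ℕ).card) = _
      rw [show Nstat (w * Equiv.swap 1 (p+2)) [] = 0 from rfl, Finset.card_singleton, pow_one]
      ring_nf
    · intro K hK hne
      rw [if_neg]
      rintro ⟨hBr, hfin⟩
      rcases K.eq_empty_or_nonempty with rfl | hKne
      · rw [TL_empty] at hfin
        exact hba (hfin.symm)
      · have hsub := Finset.mem_powerset.mp hK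
        have hlne : K.sort (· ≤ ·) ≠ [] := by
          intro h0
          obtain ⟨x, hx⟩ := hKne
          have := (Finset.mem_sort (α := ℕ) (· ≤ ·)).mpr hx
          rw [h0] at this
          exact absurd this List.not_mem_nil
        have hsort := (Finset.sortedLT_sort K).pairwise
        have h2 : ∀ k ∈ K.sort (· ≤ ·), 2 ≤ k := by
          intro k hk
          have := Finset.mem_Icc.mp (hsub ((Finset.mem_sort (α := ℕ) (· ≤ ·)).mp hk))
          omega
        obtain ⟨g, hg, hbd, hval⟩ := applyT_final (K.sort (· ≤ ·)) hlne hsort h2 w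
        rw [TL_eq] at hfin
        rw [hfin] at hval
        have hgm : g = p + 2 := w.injective (by rw [← hval, hm])
        apply hne
        apply Finset.eq_singleton_iff_unique_mem.mpr
        constructor
        · rw [← hgm]; exact (Finset.mem_sort (α := ℕ) (· ≤ ·)).mp hg
        · intro x hx
          have hx1 := hbd x ((Finset.mem_sort (α := ℕ) (· ≤ ·)).mpr hx)
          have hx2 := Finset.mem_Icc.mp (hsub hx)
          omega
  | succ q ih =>
    intro w p hw hba hab hp hq
    obtain ⟨hb1, hbn⟩ := Finset.mem_Icc.mp hb
    have hm : w (w.symm b) = b := Equiv.apply_symm_apply w b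
    have hmn : w.symm b ≤ n := by
      by_contra hc
      push_neg at hc
      have h0 := hw (w.symm b) (by rw [Finset.mem_Icc]; omega)
      omega
    have hpm : p + 2 < w.symm b := by omega
    have hn3 : p + 3 ≤ n := by omega
    set c := w (p + 2) with hc_def
    have hcb : c ≠ b := by
      intro e
      have : p + 2 = w.symm b := w.injective (by rw [hm, ← e])
      omega
    have hicc : Finset.Icc (p + 2) n = insert (p + 2) (Finset.Icc (p + 3) n) := by
      ext x
      rw [Finset.mem_insert, Finset.mem_Icc, Finset.mem_Icc]
      omega
    have hnotmem : p + 2 ∉ Finset.Icc (p + 3) n := by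
      rw [Finset.mem_Icc]; omega
    rw [Finset.sum_filter, hicc, Finset.sum_powerset_insert hnotmem]
    have hS1 : ∑ K ∈ (Finset.Icc (p + 3) n).powerset,
        (if BruhatInc n w (TL K) ∧ applyT w (TL K) 1 = b then
          (X : Polynomial ℤ) ^ Nstat w (TL K) * (1 - X) ^ K.card else 0)
        = X ^ Nab (w 1) b ((List.range' 2 (p + 1)).map w) * (1 - X) := by
      rw [← Finset.sum_filter, show p + 3 = p + 1 + 2 from rfl]
      exact ih w (p + 1) hw hba hab (by omega) (by omega)
    rw [hS1]
    have hmapcat : (List.range' 2 (p + 1)).map w = ((List.range' 2 p).map w) ++ [c] := by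
      rw [range'_two_concat, List.map_append, List.map_singleton]
    have hTLins : ∀ K' : Finset ℕ, K' ∈ (Finset.Icc (p + 3) n).powerset →
        TL (insert (p + 2) K') = (1, p + 2) :: TL K' := by
      intro K' hK'
      have hsub := Finset.mem_powerset.mp hK'
      rw [TL_eq, Finset.sort_insert (· ≤ ·)
        (fun x hx => by have := Finset.mem_Icc.mp (hsub hx); omega)
        (fun h => hnotmem (hsub h)), List.map_cons, ← TL_eq]
    set w' := w * Equiv.swap 1 (p + 2) with hw'_def
    have hv1 : w' 1 = c := by simp [hw'_def, Equiv.Perm.mul_apply, hc_def]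
    have hv2 : w' (p + 2) = w 1 := by simp [hw'_def, Equiv.Perm.mul_apply]
    have hell : ell n w < ell n w' ↔ w 1 < c :=
      ell_lt_iff n w (Finset.mem_Icc.mpr (by omega)) (Finset.mem_Icc.mpr (by omega)) (by omega)
    by_cases hac : w 1 < c
    · by_cases hcb2 : c < b
      · -- main case: a < c < b
        have hcnotin : c ∉ (List.range' 2 p).map w := by
          intro hmem
          obtain ⟨x, hx, hxe⟩ := List.mem_map.mp hmem
          have : x = p + 2 := w.injective hxe
          rw [List.mem_range'] at hx
          obtain ⟨t, ht, rfl⟩ := hx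
          omega
        have hN : Nab (w 1) b ((List.range' 2 p).map w)
            = Nab (w 1) c ((List.range' 2 p).map w) + Nab c b ((List.range' 2 p).map w) :=
          Nab_split (w 1) b c hac hcb2 _ hcnotin
        -- rewrite the second sum
        have hstep : ∀ K' ∈ (Finset.Icc (p + 3) n).powerset,
            (if BruhatInc n w (TL (insert (p + 2) K')) ∧
                applyT w (TL (insert (p + 2) K')) 1 = b then
              (X : Polynomial ℤ) ^ Nstat w (TL (insert (p + 2) K'))
                * (1 - X) ^ (insert (p + 2) K').card else 0)
            = (X ^ Nab (w 1) c ((List.range' 2 p).map w) * (1 - X)) *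
              (if BruhatInc n w' (TL K') ∧ applyT w' (TL K') 1 = b then
                X ^ Nstat w' (TL K') * (1 - X) ^ K'.card else 0) := by
          intro K' hK'
          have hsub := Finset.mem_powerset.mp hK'
          have hpnotK : p + 2 ∉ K' := fun h => hnotmem (hsub h)
          rw [hTLins K' hK']
          have hcond : (BruhatInc n w ((1, p + 2) :: TL K') ∧
              applyT w ((1, p + 2) :: TL K') 1 = b) ↔
              (BruhatInc n w' (TL K') ∧ applyT w' (TL K') 1 = b) := by
            rw [bruhatInc_cons, applyT_cons]
            constructor
            · rintro ⟨⟨-, h2⟩, h3⟩; exact ⟨h2, h3⟩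
            · rintro ⟨h2, h3⟩; exact ⟨⟨hell.mpr hac, h2⟩, h3⟩
          rw [if_congr hcond rfl rfl]
          split_ifs with h
          · rw [Nstat_cons]
            have hwin : (List.range' 1 ((1, p+2).2 + 1 - (1, p+2).1)).map w'
                = c :: (((List.range' 2 p).map w) ++ [w 1]) := by
              rw [show (1, p+2).2 + 1 - (1, p+2).1 = p + 2 from rfl, range'_split]
              rw [List.map_cons, List.map_append, List.map_singleton]
              rw [hw'_def,
                map_congr_swap w 1 (p+2) p 2 (fun x h1 h2 => by omega) (fun x h1 h2 => by omega),
                ← hw'_def]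
              rw [hv1, hv2]
            rw [hwin]
            rw [show ((1, p+2) : ℕ × ℕ).1 = 1 from rfl, show ((1, p+2) : ℕ × ℕ).2 = p + 2 from rfl,
              hv1, hv2]
            rw [min_eq_right (le_of_lt hac), max_eq_left (le_of_lt hac)]
            rw [Nab_cons, Nab_append, Nab_single]
            rw [if_neg (by omega), if_neg (by omega)]
            rw [Finset.card_insert_of_notMem hpnotK]
            rw [pow_add, pow_add, pow_succ]
            ring
          · rw [mul_zero]
        rw [Finset.sum_congr rfl hstep, ← Finset.mul_sum, ← Finset.sum_filter]
        -- apply the induction hypothesis to w'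
        have hw's : ∀ x, x ∉ Finset.Icc 1 n → w' x = x := by
          intro x hx
          have hx' := Finset.mem_Icc.not.mp hx
          rw [hw'_def]
          simp only [Equiv.Perm.mul_apply]
          rw [Equiv.swap_apply_of_ne_of_ne (by omega) (by omega)]
          exact hw x hx
        have hsymm : w'.symm b = w.symm b := by
          rw [Equiv.symm_apply_eq]
          rw [hw'_def]
          simp only [Equiv.Perm.mul_apply]
          rw [Equiv.swap_apply_of_ne_of_ne (by omega) (by omega), hm]
        have hih := ih w' (p + 1) hw's (by rw [hv1]; exact hcb.symm) (by rw [hv1]; exact hcb2)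
          (by rw [hsymm]; omega) (by rw [hsymm]; omega)
        rw [show p + 1 + 2 = p + 3 from rfl] at hih
        rw [hih]
        have hmap' : (List.range' 2 (p + 1)).map w' = ((List.range' 2 p).map w) ++ [w 1] := by
          rw [range'_two_concat, List.map_append, List.map_singleton]
          rw [hw'_def,
            map_congr_swap w 1 (p+2) p 2 (fun x h1 h2 => by omega) (fun x h1 h2 => by omega),
            ← hw'_def, hv2]
        rw [hmap', hv1]
        rw [Nab_append, Nab_single, if_neg (by omega)]
        rw [hmapcat, Nab_append, Nab_single, if_pos ⟨hac, hcb2⟩]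
        rw [hN]
        rw [pow_add, pow_add, pow_add, pow_one]
        ring
      · -- c > b : the second sum vanishes
        have hbc : b < c := by
          rcases lt_or_ge c b with h | h
          · exact absurd h hcb2
          · omega
        have hzero : ∀ K' ∈ (Finset.Icc (p + 3) n).powerset,
            (if BruhatInc n w (TL (insert (p + 2) K')) ∧
                applyT w (TL (insert (p + 2) K')) 1 = b then
              (X : Polynomial ℤ) ^ Nstat w (TL (insert (p + 2) K'))
                * (1 - X) ^ (insert (p + 2) K').card else 0) = 0 := by
          intro K' hK'
          have hsub := Finset.mem_powerset.mp hK'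
          rw [hTLins K' hK', if_neg]
          rintro ⟨hB, hfin⟩
          rw [bruhatInc_cons] at hB
          rw [applyT_cons] at hfin
          have hmem2 : ∀ k ∈ K'.sort (· ≤ ·), k ∈ Finset.Icc 2 n := by
            intro k hk
            have := Finset.mem_Icc.mp (hsub ((Finset.mem_sort (α := ℕ) (· ≤ ·)).mp hk))
            rw [Finset.mem_Icc]
            omega
          have hmono := applyT_mono n (K'.sort (· ≤ ·)) hmem2 w' hB.2
          rw [← TL_eq] at hmono
          rw [hfin, hv1] at hmono
          omega
        rw [Finset.sum_congr rfl hzero, Finset.sum_const, smul_zero]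
        rw [hmapcat, Nab_append, Nab_single, if_neg (by omega)]
        rw [add_zero, add_zero]
    · -- c < a : the second sum vanishes
      have hzero : ∀ K' ∈ (Finset.Icc (p + 3) n).powerset,
          (if BruhatInc n w (TL (insert (p + 2) K')) ∧
              applyT w (TL (insert (p + 2) K')) 1 = b then
            (X : Polynomial ℤ) ^ Nstat w (TL (insert (p + 2) K'))
              * (1 - X) ^ (insert (p + 2) K').card else 0) = 0 := by
        intro K' hK'
        rw [hTLins K' hK', if_neg]
        rintro ⟨hB, -⟩
        rw [bruhatInc_cons] at hB
        exact hac (hell.mp hB.1)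
      rw [Finset.sum_congr rfl hzero, Finset.sum_const, smul_zero]
      rw [hmapcat, Nab_append, Nab_single, if_neg (by omega)]
      rw [add_zero, add_zero]


open scoped Classical in
/-- Proposition 3.1: single-entry compression for the alcove formula.
Here `Γ(1,p) = ((1,p+2),…,(1,n))`, the sum is over subsets `K` of `{p+2,…,n}`
(taken in increasing order) for which the chain is Bruhat-increasing and
`wT(1) = b`, and `w[2,p+1]` is the window of values of `w` at positions `2,…,p+1`. -/
theorem single_entry_compression (n : ℕ) (w : Equiv.Perm ℕ)
    (hw : ∀ x, x ∉ Finset.Icc 1 n → w x = x)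
    (b : ℕ) (hb : b ∈ Finset.Icc 1 n) (hba : b ≠ w 1) (hab : w 1 < b)
    (p : ℕ) (hp : p + 1 < w.symm b) :
    ∑ K ∈ (Finset.Icc (p + 2) n).powerset.filter
        (fun K => BruhatInc n w (TL K) ∧ applyT w (TL K) 1 = b),
      (X : Polynomial ℤ) ^ Nstat w (TL K) * (1 - X) ^ K.card
    = X ^ Nab (w 1) b ((List.range' 2 p).map w) * (1 - X) := by
  exact aux n b hb (w.symm b - (p + 2)) w p hw hba hab hp rfl
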